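/- Let Ω be a compact metric space with distance ρ and let F : [0,∞) → [0,∞) be continuous. If μ₂ ∈ 𝒫(Ω) is a local minimizer of I_F in the weak-* topology and μ₁ ∈ 𝒫(Ω) satisfies supp μ₁ ⊆ supp μ₂, then I_F(μ₁) = I_F(μ₂) + I_F(μ₁ − μ₂) and, in particular, I_F(μ₁) ≥ I_F(μ₂). -/

import Mathlib

open MeasureTheory Topology Filter
open scoped ENNReal NNReal

/-- The support of a (nonnegative) Borel measure: points all of whose open
neighborhoods have positive measure. -/
def msupp {Ω : Type*} [TopologicalSpace Ω] {m : MeasurableSpace Ω}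
    (μ : Measure Ω) : Set Ω :=
  {x | ∀ U : Set Ω, IsOpen U → x ∈ U → μ U ≠ 0}

/-- The interaction energy `I_F(μ) = ∬ F(ρ(x,y)) dμ(x) dμ(y)` of a measure
with respect to a kernel `F` and a distance function `ρ`. -/
noncomputable def energy {Ω : Type*} {m : MeasurableSpace Ω}
    (F : ℝ → ℝ) (ρ : Ω → Ω → ℝ) (μ : Measure Ω) : ℝ :=
  ∫ x, ∫ y, F (ρ x y) ∂μ ∂μ

/-- The integral of a function against a finite signed measure, via the
Jordan decomposition. -/
noncomputable def sintegral {Ω : Type*} {m : MeasurableSpace Ω}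
    (ν : SignedMeasure Ω) (f : Ω → ℝ) : ℝ :=
  ∫ x, f x ∂ν.toJordanDecomposition.posPart
    - ∫ x, f x ∂ν.toJordanDecomposition.negPart

/-- The interaction energy `∬ F(ρ(x,y)) dν(x) dν(y)` of a finite signed
measure `ν`. -/
noncomputable def signedEnergy {Ω : Type*} {m : MeasurableSpace Ω}
    (F : ℝ → ℝ) (ρ : Ω → Ω → ℝ) (ν : SignedMeasure Ω) : ℝ :=
  sintegral ν (fun x => sintegral ν (fun y => F (ρ x y)))

/-- The Wasserstein `d_∞` distance: infimum over couplings `π` of `μ` and `ν`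
of the supremum of `ρ(x,y)` over the support of `π`. -/
noncomputable def dInfty {Ω : Type*} [TopologicalSpace Ω] {m : MeasurableSpace Ω}
    (ρ : Ω → Ω → ℝ) (μ ν : Measure Ω) : ℝ≥0∞ :=
  ⨅ (π : Measure (Ω × Ω)) (_ : π.map Prod.fst = μ ∧ π.map Prod.snd = ν),
    ⨆ (p : Ω × Ω) (_ : p ∈ msupp π), ENNReal.ofReal (ρ p.1 p.2)

section AuxiliaryLemmas

lemma poly_nonneg {L Q δ : ℝ} (hδ : 0 < δ)
    (h : ∀ t ∈ Set.Ioc (0:ℝ) δ, 0 ≤ L * t + Q * t ^ 2) :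
    0 ≤ L ∧ (L ≤ 0 → 0 ≤ Q) := by
  have h0L : 0 ≤ L := by
    by_contra hL
    push_neg at hL
    have hQ1 : (0:ℝ) < |Q| + 1 := by positivity
    set t := min δ (-L / (|Q| + 1)) with ht_def
    have ht0 : 0 < t := lt_min hδ (div_pos (by linarith) hQ1)
    have htδ : t ≤ δ := min_le_left _ _
    have htL : t * (|Q| + 1) ≤ -L := by
      calc t * (|Q| + 1) ≤ (-L / (|Q| + 1)) * (|Q| + 1) :=
            mul_le_mul_of_nonneg_right (min_le_right _ _) hQ1.le
        _ = -L := by field_simp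
    have h' := h t ⟨ht0, htδ⟩
    have hQ : Q ≤ |Q| := le_abs_self Q
    nlinarith [mul_pos ht0 ht0]
  refine ⟨h0L, fun hL0 => ?_⟩
  have hL : L = 0 := le_antisymm hL0 h0L
  have h' := h δ ⟨hδ, le_refl δ⟩
  rw [hL] at h'
  nlinarith [mul_pos hδ hδ]

variable {Ω : Type*} [MetricSpace Ω] [CompactSpace Ω] [MeasurableSpace Ω] [BorelSpace Ω]

lemma cont_integrable {X : Type*} [MetricSpace X] [CompactSpace X] [MeasurableSpace X]
    [BorelSpace X] {f : X → ℝ} (hf : Continuous f) (μ : Measure X) [IsFiniteMeasure μ] :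
    Integrable f μ := by
  rw [← integrableOn_univ]
  exact hf.continuousOn.integrableOn_compact isCompact_univ

omit [BorelSpace Ω] in
lemma msupp_compl_null (μ : Measure Ω) : μ (msupp μ)ᶜ = 0 := by
  apply measure_null_of_locally_null
  intro x hx
  simp only [msupp, Set.mem_compl_iff, Set.mem_setOf_eq, not_forall] at hx
  obtain ⟨U, hUo, hxU, hU0⟩ := hx
  push_neg at hU0
  exact ⟨U, mem_nhdsWithin_of_mem_nhds (hUo.mem_nhds hxU), hU0⟩

omit [CompactSpace Ω] [BorelSpace Ω] in
lemma eq_zero_on_msupp {g : Ω → ℝ} (hg : Continuous g) (μ : Measure Ω)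
    (h : g =ᵐ[μ] fun _ => 0) {x : Ω} (hx : x ∈ msupp μ) : g x = 0 := by
  by_contra hne
  have hUo : IsOpen {y | g y ≠ 0} := (isClosed_eq hg continuous_const).isOpen_compl
  exact hx _ hUo hne (ae_iff.mp h)

lemma cont_inner {K : Ω → Ω → ℝ} (hK : Continuous fun p : Ω × Ω => K p.1 p.2)
    (ν : Measure Ω) [IsFiniteMeasure ν] :
    Continuous fun x => ∫ y, K x y ∂ν := by
  set B : BoundedContinuousFunction (Ω × Ω) ℝ := BoundedContinuousFunction.mkOfCompact ⟨_, hK⟩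
  rw [continuous_iff_continuousAt]
  intro x
  apply continuousAt_of_dominated (bound := fun _ => ‖B‖)
  · exact Eventually.of_forall fun x' =>
      (hK.comp (Continuous.prodMk_right x')).aestronglyMeasurable
  · exact Eventually.of_forall fun x' =>
      Eventually.of_forall fun y => B.norm_coe_le_norm (x', y)
  · exact integrable_const _
  · exact Eventually.of_forall fun y =>
      ((hK.comp (continuous_id.prodMk continuous_const)).continuousAt)

omit [MetricSpace Ω] [CompactSpace Ω] [BorelSpace Ω] in
lemma integral_smul_add_meas (μ ν : Measure Ω) [IsFiniteMeasure μ] [IsFiniteMeasure ν]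
    {a b : ℝ} (ha : 0 ≤ a) (hb : 0 ≤ b) (f : Ω → ℝ) (hfμ : Integrable f μ)
    (hfν : Integrable f ν) :
    ∫ x, f x ∂(ENNReal.ofReal a • μ + ENNReal.ofReal b • ν)
      = a * ∫ x, f x ∂μ + b * ∫ x, f x ∂ν := by
  rw [integral_add_measure (hfμ.smul_measure ENNReal.ofReal_ne_top)
    (hfν.smul_measure ENNReal.ofReal_ne_top), integral_smul_measure, integral_smul_measure,
    ENNReal.toReal_ofReal ha, ENNReal.toReal_ofReal hb, smul_eq_mul, smul_eq_mul]

omit [MetricSpace Ω] [CompactSpace Ω] [BorelSpace Ω] in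
lemma mix_isProb (μ ν : Measure Ω) [IsProbabilityMeasure μ] [IsProbabilityMeasure ν]
    {t : ℝ} (h0 : 0 ≤ t) (h1 : t ≤ 1) :
    IsProbabilityMeasure (ENNReal.ofReal (1 - t) • μ + ENNReal.ofReal t • ν) := by
  constructor
  simp only [Measure.coe_add, Measure.coe_smul, Pi.add_apply, Pi.smul_apply, smul_eq_mul,
    measure_univ, mul_one]
  rw [← ENNReal.ofReal_add (by linarith) h0]
  norm_num

lemma sintegral_sub (μ₁ μ₂ : Measure Ω) [IsFiniteMeasure μ₁] [IsFiniteMeasure μ₂]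
    {f : Ω → ℝ} (hf : Continuous f) :
    sintegral (μ₁.toSignedMeasure - μ₂.toSignedMeasure) f
      = ∫ x, f x ∂μ₁ - ∫ x, f x ∂μ₂ := by
  set s := μ₁.toSignedMeasure - μ₂.toSignedMeasure with hs
  set p := s.toJordanDecomposition.posPart with hp
  set n := s.toJordanDecomposition.negPart with hn
  have hdec : p.toSignedMeasure - n.toSignedMeasure = s :=
    s.toSignedMeasure_toJordanDecomposition
  have hdec2 : p.toSignedMeasure + μ₂.toSignedMeasure
      = μ₁.toSignedMeasure + n.toSignedMeasure :=
    sub_eq_sub_iff_add_eq_add.mp (hdec.trans hs)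
  have hkey : p + μ₂ = n + μ₁ := by
    rw [← Measure.toSignedMeasure_eq_toSignedMeasure_iff,
      Measure.toSignedMeasure_add, Measure.toSignedMeasure_add, hdec2, add_comm]
  have h1 : ∫ x, f x ∂p + ∫ x, f x ∂μ₂ = ∫ x, f x ∂n + ∫ x, f x ∂μ₁ := by
    rw [← integral_add_measure (cont_integrable hf p) (cont_integrable hf μ₂),
      ← integral_add_measure (cont_integrable hf n) (cont_integrable hf μ₁), hkey]
  simp only [sintegral, ← hp, ← hn]
  linarith

lemma energy_mix_expand {K : Ω → Ω → ℝ} (hK : Continuous fun p : Ω × Ω => K p.1 p.2)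
    (μ ν : Measure Ω) [IsProbabilityMeasure μ] [IsProbabilityMeasure ν]
    {t : ℝ} (h0 : 0 ≤ t) (h1 : t ≤ 1) :
    (∫ x, ∫ y, K x y ∂(ENNReal.ofReal (1 - t) • μ + ENNReal.ofReal t • ν)
        ∂(ENNReal.ofReal (1 - t) • μ + ENNReal.ofReal t • ν))
      = (∫ x, ∫ y, K x y ∂μ ∂μ)
        + t * ((∫ x, ∫ y, K x y ∂ν ∂μ) + (∫ x, ∫ y, K x y ∂μ ∂ν)
            - 2 * (∫ x, ∫ y, K x y ∂μ ∂μ))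
        + t ^ 2 * ((∫ x, ∫ y, K x y ∂μ ∂μ) - (∫ x, ∫ y, K x y ∂ν ∂μ)
            - (∫ x, ∫ y, K x y ∂μ ∂ν) + (∫ x, ∫ y, K x y ∂ν ∂ν)) := by
  have h1t : (0:ℝ) ≤ 1 - t := by linarith
  have hKx : ∀ x, Continuous fun y => K x y := fun x => hK.comp (Continuous.prodMk_right x)
  have hinner : ∀ x, ∫ y, K x y ∂(ENNReal.ofReal (1 - t) • μ + ENNReal.ofReal t • ν)
      = (1 - t) * ∫ y, K x y ∂μ + t * ∫ y, K x y ∂ν := fun x =>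
    integral_smul_add_meas μ ν h1t h0 _ (cont_integrable (hKx x) μ) (cont_integrable (hKx x) ν)
  have hcont : Continuous fun x => (1 - t) * ∫ y, K x y ∂μ + t * ∫ y, K x y ∂ν :=
    (continuous_const.mul (cont_inner hK μ)).add (continuous_const.mul (cont_inner hK ν))
  have hsplit : ∀ (ρ : Measure Ω) [IsFiniteMeasure ρ],
      ∫ x, ((1 - t) * ∫ y, K x y ∂μ + t * ∫ y, K x y ∂ν) ∂ρ
        = (1 - t) * (∫ x, ∫ y, K x y ∂μ ∂ρ) + t * (∫ x, ∫ y, K x y ∂ν ∂ρ) := by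
    intro ρ _
    rw [integral_add (((cont_integrable (cont_inner hK μ) ρ)).const_mul _)
      (((cont_integrable (cont_inner hK ν) ρ)).const_mul _), integral_const_mul,
      integral_const_mul]
  calc ∫ x, ∫ y, K x y ∂(ENNReal.ofReal (1 - t) • μ + ENNReal.ofReal t • ν)
          ∂(ENNReal.ofReal (1 - t) • μ + ENNReal.ofReal t • ν)
      = ∫ x, ((1 - t) * ∫ y, K x y ∂μ + t * ∫ y, K x y ∂ν)
          ∂(ENNReal.ofReal (1 - t) • μ + ENNReal.ofReal t • ν) := by
        exact integral_congr_ae (Eventually.of_forall hinner)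
    _ = (1 - t) * ∫ x, ((1 - t) * ∫ y, K x y ∂μ + t * ∫ y, K x y ∂ν) ∂μ
        + t * ∫ x, ((1 - t) * ∫ y, K x y ∂μ + t * ∫ y, K x y ∂ν) ∂ν :=
        integral_smul_add_meas μ ν h1t h0 _ (cont_integrable hcont μ) (cont_integrable hcont ν)
    _ = (1 - t) * ((1 - t) * (∫ x, ∫ y, K x y ∂μ ∂μ) + t * (∫ x, ∫ y, K x y ∂ν ∂μ))
        + t * ((1 - t) * (∫ x, ∫ y, K x y ∂μ ∂ν) + t * (∫ x, ∫ y, K x y ∂ν ∂ν)) := by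
        rw [hsplit μ, hsplit ν]
    _ = _ := by ring

/-- The segment `t ↦ (1-t) μ + t ν` (with `t` clamped to `[0,1]`) inside the
probability measures. -/
noncomputable def mixPM (μ ν : ProbabilityMeasure Ω) (t : ℝ) : ProbabilityMeasure Ω :=
  ⟨ENNReal.ofReal (1 - min (max t 0) 1) • (μ : Measure Ω)
      + ENNReal.ofReal (min (max t 0) 1) • (ν : Measure Ω),
    mix_isProb _ _ (le_min (le_max_right t 0) zero_le_one) (min_le_right _ _)⟩

lemma mixPM_coe (μ ν : ProbabilityMeasure Ω) (t : ℝ) :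
    (mixPM μ ν t : Measure Ω)
      = ENNReal.ofReal (1 - min (max t 0) 1) • (μ : Measure Ω)
        + ENNReal.ofReal (min (max t 0) 1) • (ν : Measure Ω) := rfl

lemma mix_tendsto (μ ν : ProbabilityMeasure Ω) :
    Tendsto (mixPM μ ν) (𝓝 0) (𝓝 μ) := by
  apply ProbabilityMeasure.tendsto_iff_forall_integral_tendsto.mpr
  intro f
  have hc : Continuous fun t : ℝ => min (max t 0) 1 :=
    (continuous_id.max continuous_const).min continuous_const
  have heq : ∀ t : ℝ, ∫ ω, f ω ∂(mixPM μ ν t : Measure Ω)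
      = (1 - min (max t 0) 1) * ∫ ω, f ω ∂(μ : Measure Ω)
        + min (max t 0) 1 * ∫ ω, f ω ∂(ν : Measure Ω) := by
    intro t
    rw [mixPM_coe]
    exact integral_smul_add_meas _ _
      (by linarith [min_le_right (max t 0) (1:ℝ)])
      (le_min (le_max_right t 0) zero_le_one) _ (f.integrable _) (f.integrable _)
  have htarget : Tendsto (fun t : ℝ => (1 - min (max t 0) 1) * ∫ ω, f ω ∂(μ : Measure Ω)
      + min (max t 0) 1 * ∫ ω, f ω ∂(ν : Measure Ω)) (𝓝 0) (𝓝 (∫ ω, f ω ∂(μ : Measure Ω))) := by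
    have hcont2 : Continuous fun t : ℝ =>
        (1 - min (max t 0) 1) * (∫ ω, f ω ∂(μ : Measure Ω))
          + min (max t 0) 1 * ∫ ω, f ω ∂(ν : Measure Ω) :=
      ((continuous_const.sub hc).mul continuous_const).add (hc.mul continuous_const)
    have h3 := hcont2.tendsto 0
    simpa using h3
  exact htarget.congr fun t => (heq t).symm

end AuxiliaryLemmas

/-- energy decomposition along a local minimizer.
If `μ₂` is a local weak-* minimizer of `I_F` and `supp μ₁ ⊆ supp μ₂`, then
`I_F(μ₁) = I_F(μ₂) + I_F(μ₁ − μ₂)`; in particular `I_F(μ₁) ≥ I_F(μ₂)`. -/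
theorem stmt_6 {Ω : Type*} [MetricSpace Ω] [CompactSpace Ω]
    [MeasurableSpace Ω] [BorelSpace Ω]
    (F : ℝ → ℝ) (hF_cont : ContinuousOn F (Set.Ici 0))
    (hF_nonneg : ∀ t ∈ Set.Ici (0 : ℝ), 0 ≤ F t)
    (μ₁ μ₂ : ProbabilityMeasure Ω)
    (hmin₂ : ∃ U ∈ 𝓝 μ₂, ∀ μ ∈ U,
      energy F dist (μ₂ : Measure Ω) ≤ energy F dist (μ : Measure Ω))
    (hsupp : msupp (μ₁ : Measure Ω) ⊆ msupp (μ₂ : Measure Ω)) :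
    energy F dist (μ₁ : Measure Ω) =
      energy F dist (μ₂ : Measure Ω) +
        signedEnergy F dist
          ((μ₁ : Measure Ω).toSignedMeasure - (μ₂ : Measure Ω).toSignedMeasure) ∧
    energy F dist (μ₂ : Measure Ω) ≤ energy F dist (μ₁ : Measure Ω) := by
  classical
  set K : Ω → Ω → ℝ := fun x y => F (dist x y) with hKdef
  have hK : Continuous fun p : Ω × Ω => K p.1 p.2 := by
    have h : ContinuousOn (fun p : Ω × Ω => F (dist p.1 p.2)) Set.univ :=
      hF_cont.comp continuous_dist.continuousOn (fun p _ => dist_nonneg)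
    rwa [continuousOn_univ] at h
  have hKx : ∀ x, Continuous fun y => K x y := fun x => hK.comp (Continuous.prodMk_right x)
  have hKsymm : ∀ x y, K x y = K y x := fun x y => by simp [hKdef, dist_comm]
  have energy_eq : ∀ ρ : Measure Ω, energy F dist ρ = ∫ x, ∫ y, K x y ∂ρ ∂ρ := fun ρ => rfl
  obtain ⟨U, hU, hUmin⟩ := hmin₂
  -- notation
  set I₂ : ℝ := ∫ x, ∫ y, K x y ∂(μ₂ : Measure Ω) ∂(μ₂ : Measure Ω) with hI₂
  set I₁ : ℝ := ∫ x, ∫ y, K x y ∂(μ₁ : Measure Ω) ∂(μ₁ : Measure Ω) with hI₁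
  -- Key: for every probability measure σ, the first and second variation inequalities.
  have key : ∀ σ : ProbabilityMeasure Ω,
      0 ≤ (∫ x, ∫ y, K x y ∂(σ : Measure Ω) ∂(μ₂ : Measure Ω))
          + (∫ x, ∫ y, K x y ∂(μ₂ : Measure Ω) ∂(σ : Measure Ω)) - 2 * I₂ ∧
      ((∫ x, ∫ y, K x y ∂(σ : Measure Ω) ∂(μ₂ : Measure Ω))
          + (∫ x, ∫ y, K x y ∂(μ₂ : Measure Ω) ∂(σ : Measure Ω)) - 2 * I₂ ≤ 0 →
        0 ≤ I₂ - (∫ x, ∫ y, K x y ∂(σ : Measure Ω) ∂(μ₂ : Measure Ω))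
          - (∫ x, ∫ y, K x y ∂(μ₂ : Measure Ω) ∂(σ : Measure Ω))
          + ∫ x, ∫ y, K x y ∂(σ : Measure Ω) ∂(σ : Measure Ω)) := by
    intro σ
    have hev := (mix_tendsto μ₂ σ).eventually_mem hU
    rw [Metric.eventually_nhds_iff] at hev
    obtain ⟨δ, hδ0, hδ⟩ := hev
    have hδ'0 : 0 < min (δ / 2) 1 := lt_min (by linarith) one_pos
    apply poly_nonneg hδ'0
    intro t ⟨ht0, htδ⟩
    have ht1 : t ≤ 1 := htδ.trans (min_le_right _ _)
    have htd : t < δ := lt_of_le_of_lt (htδ.trans (min_le_left _ _)) (by linarith)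
    have hmem : mixPM μ₂ σ t ∈ U := hδ (by simpa [Real.dist_eq, abs_of_pos ht0] using htd)
    have hle := hUmin _ hmem
    have hct : min (max t 0) 1 = t := by
      rw [max_eq_left ht0.le, min_eq_left ht1]
    rw [energy_eq, energy_eq, mixPM_coe, hct] at hle
    rw [energy_mix_expand hK (μ₂ : Measure Ω) (σ : Measure Ω) ht0.le ht1] at hle
    rw [← hI₂] at hle
    linarith
  -- the potential of μ₂
  set ψ : Ω → ℝ := fun x => ∫ y, K x y ∂(μ₂ : Measure Ω) with hψ
  have hψcont : Continuous ψ := cont_inner hK _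
  -- ψ ≥ I₂ everywhere, using Dirac perturbations
  have hψge : ∀ x, I₂ ≤ ψ x := by
    intro x
    set σx : ProbabilityMeasure Ω := ⟨Measure.dirac x, inferInstance⟩ with hσx
    have hx := (key σx).1
    have hcoe : (σx : Measure Ω) = Measure.dirac x := rfl
    rw [hcoe] at hx
    have hd1 : (∫ x', ∫ y, K x' y ∂(Measure.dirac x) ∂(μ₂ : Measure Ω)) = ψ x := by
      have h5 : ∀ x', ∫ y, K x' y ∂(Measure.dirac x) = K x' x := fun x' =>
        integral_dirac _ _
      rw [integral_congr_ae (Eventually.of_forall h5)]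
      calc ∫ x', K x' x ∂(μ₂ : Measure Ω) = ∫ x', K x x' ∂(μ₂ : Measure Ω) :=
            integral_congr_ae (Eventually.of_forall fun x' => by rw [hKsymm])
        _ = ψ x := rfl
    have hd2 : (∫ x', ψ x' ∂(Measure.dirac x)) = ψ x :=
      integral_dirac' _ _ (hψcont.stronglyMeasurable)
    rw [hd1, hd2] at hx
    linarith
  -- ∫ ψ dμ₂ = I₂ and hence ψ = I₂ on the support of μ₂
  have hψint₂ : ∫ x, ψ x ∂(μ₂ : Measure Ω) = I₂ := rfl
  set g : Ω → ℝ := fun x => ψ x - I₂ with hg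
  have hgcont : Continuous g := hψcont.sub continuous_const
  have hgnonneg : ∀ x, 0 ≤ g x := fun x => by simp [hg]; linarith [hψge x]
  have hgint : ∫ x, g x ∂(μ₂ : Measure Ω) = 0 := by
    rw [integral_sub (cont_integrable hψcont _) (integrable_const _), hψint₂]
    simp
  have hgae : g =ᵐ[(μ₂ : Measure Ω)] 0 :=
    (integral_eq_zero_iff_of_nonneg hgnonneg (cont_integrable hgcont _)).mp hgint
  have hgsupp : ∀ x ∈ msupp (μ₂ : Measure Ω), g x = 0 := fun x hx =>
    eq_zero_on_msupp hgcont _ hgae hx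
  -- hence g = 0 μ₁-a.e.
  have hgae₁ : g =ᵐ[(μ₁ : Measure Ω)] 0 := by
    rw [Filter.EventuallyEq, ae_iff]
    apply measure_mono_null _ (msupp_compl_null (μ₁ : Measure Ω))
    intro x hx
    simp only [Set.mem_setOf_eq] at hx
    intro hxs
    exact hx (hgsupp x (hsupp hxs))
  have hψint₁ : ∫ x, ψ x ∂(μ₁ : Measure Ω) = I₂ := by
    have h0 : ∫ x, g x ∂(μ₁ : Measure Ω) = 0 := by
      rw [integral_congr_ae hgae₁]; simp
    rw [integral_sub (cont_integrable hψcont _) (integrable_const _)] at h0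
    simp only [integral_const, measure_univ, probReal_univ, ENNReal.toReal_one, one_smul, smul_eq_mul] at h0
    linarith
  -- the two cross terms both equal I₂
  have hb1 : (∫ x, ∫ y, K x y ∂(μ₂ : Measure Ω) ∂(μ₁ : Measure Ω)) = I₂ := hψint₁
  have hb2 : (∫ x, ∫ y, K x y ∂(μ₁ : Measure Ω) ∂(μ₂ : Measure Ω)) = I₂ := by
    have hKint : Integrable (fun p : Ω × Ω => K p.1 p.2)
        ((μ₂ : Measure Ω).prod (μ₁ : Measure Ω)) := cont_integrable hK _
    have hswap := integral_integral_swap (f := fun x y => K x y) hKint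
    rw [hswap]
    calc ∫ y, ∫ x, K x y ∂(μ₂ : Measure Ω) ∂(μ₁ : Measure Ω)
        = ∫ y, ψ y ∂(μ₁ : Measure Ω) := by
          apply integral_congr_ae (Eventually.of_forall fun y => ?_)
          exact integral_congr_ae (Eventually.of_forall fun x => by rw [hKsymm])
      _ = I₂ := hψint₁
  -- first variation vanishes at σ = μ₁; second variation is then nonnegative
  obtain ⟨hL, hQ⟩ := key μ₁
  rw [hb1, hb2] at hL hQ
  have hQ' := hQ (by linarith)
  rw [← hI₁] at hQ'
  -- compute the signed energy
  have hinner_eq : (fun x => sintegral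
      ((μ₁ : Measure Ω).toSignedMeasure - (μ₂ : Measure Ω).toSignedMeasure)
      (fun y => F (dist x y)))
      = fun x => (∫ y, K x y ∂(μ₁ : Measure Ω)) - ψ x := by
    funext x
    exact sintegral_sub _ _ (hKx x)
  have hψ₁cont : Continuous fun x => ∫ y, K x y ∂(μ₁ : Measure Ω) := cont_inner hK _
  have hSE : signedEnergy F dist
      ((μ₁ : Measure Ω).toSignedMeasure - (μ₂ : Measure Ω).toSignedMeasure)
      = I₁ - I₂ := by
    show sintegral _ _ = _
    rw [hinner_eq, sintegral_sub (f := fun x => (∫ y, K x y ∂(μ₁ : Measure Ω)) - ψ x) _ _ (hψ₁cont.sub hψcont),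
      integral_sub (cont_integrable hψ₁cont _) (cont_integrable hψcont _),
      integral_sub (cont_integrable hψ₁cont _) (cont_integrable hψcont _)]
    have e1 : ∫ x, ∫ y, K x y ∂(μ₁ : Measure Ω) ∂(μ₁ : Measure Ω) = I₁ := rfl
    have e2 : ∫ x, ψ x ∂(μ₁ : Measure Ω) = I₂ := hψint₁
    have e3 : ∫ x, ∫ y, K x y ∂(μ₁ : Measure Ω) ∂(μ₂ : Measure Ω) = I₂ := hb2
    have e4 : ∫ x, ψ x ∂(μ₂ : Measure Ω) = I₂ := hψint₂
    rw [e1, e2, e3, e4]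
    ring
  constructor
  · rw [energy_eq, energy_eq, ← hI₁, ← hI₂, hSE]
    ring
  · rw [energy_eq, energy_eq, ← hI₁, ← hI₂]
    linarith
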